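/- arXiv:2303.01997 — 2 statements merged into one kernel-verified Lean document; each statement's English description precedes it below -/
import Mathlib

section
/- If H is a connected dominating graph, then e(H)/(v(H)-1) ≥ e(H')/(v(H')-1) for every subgraph H' of H with at least one edge. -/
open MeasureTheory
open scoped Classical

noncomputable section

/-- A graphon: a symmetric measurable function `[0,1]² → [0,1]` (extended to `ℝ²`). -/
structure Graphon where
  toFun : ℝ → ℝ → ℝ
  symm : ∀ x y, toFun x y = toFun y x
  measurable' : Measurable (Function.uncurry toFun)
  nonneg : ∀ x y, 0 ≤ toFun x y
  le_one : ∀ x y, toFun x y ≤ 1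

/-- The number of edges of a finite simple graph. -/
def SimpleGraph.edgeCard {V : Type} [Fintype V] (H : SimpleGraph V) : ℕ :=
  H.edgeSet.toFinset.card

/-- The homomorphism density `t_H(W)` of a graph `H` in a graphon `W`. -/
def homDensity {V : Type} [Fintype V] (H : SimpleGraph V) (W : Graphon) : ℝ :=
  ∫ x in (Set.univ.pi fun _ : V => Set.Icc (0:ℝ) 1),
    ∏ e ∈ H.edgeSet.toFinset,
      Sym2.lift ⟨fun i j => W.toFun (x i) (x j), fun i j => W.symm (x i) (x j)⟩ e

/-- The homomorphism density of an edge subset `J` (of a graph on vertex set `V`). -/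
def subDensity {V : Type} [Fintype V] (J : Finset (Sym2 V)) (W : Graphon) : ℝ :=
  ∫ x in (Set.univ.pi fun _ : V => Set.Icc (0:ℝ) 1),
    ∏ e ∈ J,
      Sym2.lift ⟨fun i j => W.toFun (x i) (x j), fun i j => W.symm (x i) (x j)⟩ e

/-- `H` dominates `H'`: `t_H(W)^{1/e(H)} ≥ t_{H'}(W)^{1/e(H')}` for every graphon `W`. -/
def Dominates {V V' : Type} [Fintype V] [Fintype V']
    (H : SimpleGraph V) (H' : SimpleGraph V') : Prop :=
  ∀ W : Graphon,
    homDensity H' W ^ ((1 : ℝ) / H'.edgeCard) ≤ homDensity H W ^ ((1 : ℝ) / H.edgeCard)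

/-- `H'` is (isomorphic to) a subgraph of `H`. -/
def IsSubgraphOf {V V' : Type} (H' : SimpleGraph V') (H : SimpleGraph V) : Prop :=
  ∃ f : H' →g H, Function.Injective f

/-- `H` is dominating: it dominates all of its subgraphs with at least one edge. -/
def IsDominating {V : Type} [Fintype V] (H : SimpleGraph V) : Prop :=
  ∀ (V' : Type) [Fintype V'] (H' : SimpleGraph V'),
    IsSubgraphOf H' H → 1 ≤ H'.edgeCard → Dominates H H'

/-- The disjoint union of `r` copies of `H`. -/
def nCopies {V : Type} (H : SimpleGraph V) (r : ℕ) : SimpleGraph (V × Fin r) where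
  Adj a b := a.2 = b.2 ∧ H.Adj a.1 b.1
  symm := ⟨fun a b h => ⟨h.1.symm, h.2.symm⟩⟩
  loopless := ⟨fun a h => H.loopless.irrefl a.1 h.2⟩

/-- The disjoint union of two graphs. -/
def disjUnion {V₁ V₂ : Type} (H₁ : SimpleGraph V₁) (H₂ : SimpleGraph V₂) :
    SimpleGraph (V₁ ⊕ V₂) where
  Adj a b := match a, b with
    | .inl a, .inl b => H₁.Adj a b
    | .inr a, .inr b => H₂.Adj a b
    | _, _ => False
  symm := ⟨by rintro (a|a) (b|b) h <;> simp_all <;> exact h.symm⟩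
  loopless := ⟨by rintro (a|a) h <;> exact (SimpleGraph.irrefl _) h⟩

/-- A cut involution of `H`: an involutive automorphism whose fixed set is a vertex
cut separating `L` and `R`, which are swapped by the involution, with no edges
between `L` and `R`. -/
structure CutInvolution {V : Type} (H : SimpleGraph V) where
  toEquiv : V ≃ V
  adj_iff : ∀ v w, H.Adj (toEquiv v) (toEquiv w) ↔ H.Adj v w
  invol : ∀ v, toEquiv (toEquiv v) = v
  L : Set V
  R : Set V
  disj : Disjoint L R
  cover : ∀ v, toEquiv v ≠ v → v ∈ L ∨ v ∈ R
  not_fixed : ∀ v ∈ L ∪ R, toEquiv v ≠ v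
  maps : ∀ v ∈ L, toEquiv v ∈ R
  no_edge : ∀ v ∈ L, ∀ w ∈ R, ¬ H.Adj v w
  L_nonempty : L.Nonempty
  R_nonempty : R.Nonempty

/-- The left-folding map `φ⁺` of a cut involution. -/
def CutInvolution.plusMap {V : Type} {H : SimpleGraph V} (c : CutInvolution H) : V → V :=
  fun v => if v ∈ c.R then c.toEquiv v else v

/-- The right-folding map `φ⁻` of a cut involution. -/
def CutInvolution.minusMap {V : Type} {H : SimpleGraph V} (c : CutInvolution H) : V → V :=
  fun v => if v ∈ c.L then c.toEquiv v else v

/-- `J(ψ) = {e ∈ E(H) : ψ(e) ∈ J}` for a (half-folding) map `ψ` on vertices. -/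
def foldSet {V : Type} [Fintype V] (H : SimpleGraph V) (J : Finset (Sym2 V)) (ψ : V → V) :
    Finset (Sym2 V) :=
  H.edgeSet.toFinset.filter (fun e => Sym2.map ψ e ∈ J)

/-- The number of homomorphisms from `H` to `G`. -/
def homCount {V U : Type} [Fintype V] [Fintype U]
    (H : SimpleGraph V) (G : SimpleGraph U) : ℕ :=
  Nat.card (H →g G)

/-- The homomorphism density `t_H(G)` for finite graphs. -/
def homDensityG {V U : Type} [Fintype V] [Fintype U]
    (H : SimpleGraph V) (G : SimpleGraph U) : ℝ :=
  (homCount H G : ℝ) / (Fintype.card U : ℝ) ^ (Fintype.card V)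

/-- The tensor (categorical) product of two graphs. -/
def tensorProd {V U : Type} (H : SimpleGraph V) (K : SimpleGraph U) :
    SimpleGraph (V × U) where
  Adj a b := H.Adj a.1 b.1 ∧ K.Adj a.2 b.2
  symm := ⟨fun a b h => ⟨h.1.symm, h.2.symm⟩⟩
  loopless := ⟨fun a h => H.loopless.irrefl a.1 h.1⟩

/-- The auxiliary graph `G*` on ordered `m`-tuples of vertices of `G`, with `a ~ a'`
iff every coordinate of `a` is adjacent in `G` to every coordinate of `a'`. -/
def auxPower {U : Type} (G : SimpleGraph U) (m : ℕ) (hm : 1 ≤ m) :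
    SimpleGraph (Fin m → U) where
  Adj a b := ∀ i j, G.Adj (a i) (b j)
  symm := ⟨fun a b h i j => (h j i).symm⟩
  loopless := ⟨fun a h => G.loopless.irrefl (a ⟨0, hm⟩) (h ⟨0, hm⟩ ⟨0, hm⟩)⟩

/-- The graph `C₆⁺`: a 6-cycle on vertices `0,…,5` together with a central vertex `6`
joined to the alternating vertices `0, 2, 4`. -/
def C6plus : SimpleGraph (Fin 7) := SimpleGraph.fromRel (fun a b =>
  (a.1 < 6 ∧ b.1 < 6 ∧ b.1 % 6 = (a.1 + 1) % 6) ∨ (a = 6 ∧ (b = 0 ∨ b = 2 ∨ b = 4)))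

end

noncomputable def W2 : Graphon where
  toFun x y := if ⌊2*x⌋ = ⌊2*y⌋ then (1:ℝ) else 0
  symm x y := by
    rcases eq_or_ne ⌊2*x⌋ ⌊2*y⌋ with h|h
    · rw [if_pos h, if_pos h.symm]
    · rw [if_neg h, if_neg h.symm]
  measurable' := by
    have : (Function.uncurry fun x y => if ⌊2*x⌋ = ⌊2*y⌋ then (1:ℝ) else 0)
        = fun p : ℝ × ℝ => if ⌊2*p.1⌋ = ⌊2*p.2⌋ then (1:ℝ) else 0 := rfl
    rw [this]
    exact Measurable.ite
      (measurableSet_eq_fun (Int.measurable_floor.comp (measurable_fst.const_mul 2))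
        (Int.measurable_floor.comp (measurable_snd.const_mul 2)))
      measurable_const measurable_const
  nonneg x y := by split <;> norm_num
  le_one x y := by split <;> norm_num

def Good {V : Type} (H : SimpleGraph V) (κ : V → Fin 2) : Prop :=
  ∀ u v, H.Adj u v → κ u = κ v

def Bset {V : Type} (κ : V → Fin 2) : Set (V → ℝ) :=
  Set.univ.pi fun v => Set.Ico (((κ v : ℕ) : ℝ) / 2) ((((κ v : ℕ) : ℝ) + 1) / 2)

lemma floor_of_mem_B {V : Type} {κ : V → Fin 2} {x : V → ℝ} (hx : x ∈ Bset κ) (v : V) :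
    ⌊2 * x v⌋ = ((κ v : ℕ) : ℤ) := by
  have h := hx v (Set.mem_univ v)
  rw [Int.floor_eq_iff]
  constructor
  · push_cast; linarith [h.1]
  · push_cast; linarith [h.2]

def Aset {V : Type} [Fintype V] (H : SimpleGraph V) : Set (V → ℝ) :=
  {x | ∀ e ∈ H.edgeSet.toFinset, (Sym2.map (fun v => ⌊2 * x v⌋) e).IsDiag}

lemma measurableSet_Aset {V : Type} [Fintype V] (H : SimpleGraph V) :
    MeasurableSet (Aset H) := by
  have : Aset H = ⋂ e ∈ H.edgeSet.toFinset,
      {x : V → ℝ | (Sym2.map (fun v => ⌊2 * x v⌋) e).IsDiag} := by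
    ext x; simp [Aset]
  rw [this]
  refine Finset.measurableSet_biInter _ fun e he => ?_
  induction e using Sym2.ind with
  | _ i j =>
    simp only [Sym2.map_pair_eq, Sym2.mk_isDiag_iff]
    exact measurableSet_eq_fun
      (Int.measurable_floor.comp ((measurable_pi_apply i).const_mul 2))
      (Int.measurable_floor.comp ((measurable_pi_apply j).const_mul 2))

lemma mem_A_iff_good {V : Type} [Fintype V] {H : SimpleGraph V} {κ : V → Fin 2}
    {x : V → ℝ} (hx : x ∈ Bset κ) : x ∈ Aset H ↔ Good H κ := by
  have hf : (fun v => ⌊2 * x v⌋) = fun v => ((κ v : ℕ) : ℤ) :=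
    funext (floor_of_mem_B hx)
  simp only [Aset, Set.mem_setOf_eq, hf]
  constructor
  · intro h u v huv
    have := h s(u,v) (by simpa [Set.mem_toFinset] using huv)
    simpa [Sym2.map_pair_eq, Sym2.mk_isDiag_iff, Fin.val_inj] using this
  · intro h e he
    revert he
    induction e using Sym2.ind with
    | _ u v =>
      intro he
      have hadj : H.Adj u v := by simpa [Set.mem_toFinset] using he
      simp [Sym2.map_pair_eq, Sym2.mk_isDiag_iff, h u v hadj]

lemma disjoint_Bset {V : Type} {κ κ' : V → Fin 2} (h : κ ≠ κ') :
    Disjoint (Bset κ) (Bset κ') := by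
  rw [Set.disjoint_left]
  intro x hx hx'
  apply h
  funext v
  have h1 := floor_of_mem_B hx v
  have h2 := floor_of_mem_B hx' v
  have : ((κ v : ℕ) : ℤ) = ((κ' v : ℕ) : ℤ) := h1 ▸ h2 ▸ rfl
  exact Fin.val_inj.mp (by exact_mod_cast this)

lemma measurableSet_Bset {V : Type} [Fintype V] (κ : V → Fin 2) :
    MeasurableSet (Bset κ) :=
  MeasurableSet.univ_pi fun v => measurableSet_Ico

lemma volume_Bset {V : Type} [Fintype V] (κ : V → Fin 2) :
    volume (Bset κ) = (2⁻¹ : ENNReal) ^ (Fintype.card V) := by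
  rw [Bset, volume_pi_pi]
  have : ∀ v : V, volume (Set.Ico (((κ v : ℕ) : ℝ) / 2) ((((κ v : ℕ) : ℝ) + 1) / 2))
      = (2⁻¹ : ENNReal) := by
    intro v
    rw [Real.volume_Ico]
    have : (((κ v : ℕ) : ℝ) + 1) / 2 - ((κ v : ℕ) : ℝ) / 2 = 2⁻¹ := by ring
    rw [this, ENNReal.ofReal_inv_of_pos two_pos, ENNReal.ofReal_ofNat]
  simp [this, Finset.prod_const, Finset.card_univ]

lemma pi_Ico_union {V : Type} [Fintype V] :
    (Set.univ.pi fun _ : V => Set.Ico (0:ℝ) 1) = ⋃ κ : V → Fin 2, Bset κ := by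
  ext x
  simp only [Set.mem_pi, Set.mem_univ, forall_true_left, Set.mem_iUnion]
  constructor
  · intro h
    refine ⟨fun v => if x v < 1/2 then 0 else 1, fun v _ => ?_⟩
    by_cases hv : x v < 1/2
    · simp only [if_pos hv, Fin.val_zero]
      constructor
      · push_cast; linarith [(h v).1]
      · push_cast; linarith
    · simp only [if_neg hv, Fin.val_one]
      constructor
      · push_cast; linarith
      · push_cast; linarith [(h v).2]
  · rintro ⟨κ, hκ⟩ v
    have h := hκ v (Set.mem_univ v)
    have hv : (κ v : ℕ) < 2 := (κ v).isLt
    constructor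
    · have : (0:ℝ) ≤ ((κ v : ℕ) : ℝ) / 2 := by positivity
      linarith [h.1]
    · have : (((κ v : ℕ) : ℝ) + 1) / 2 ≤ 1 := by
        have : ((κ v : ℕ) : ℝ) ≤ 1 := by exact_mod_cast Nat.lt_succ_iff.mp hv
        linarith
      linarith [h.2]

lemma volume_Icc_diff_Ico {V : Type} [Fintype V] :
    volume ((Set.univ.pi fun _ : V => Set.Icc (0:ℝ) 1)
      \ (Set.univ.pi fun _ : V => Set.Ico (0:ℝ) 1)) = 0 := by
  apply measure_mono_null (t := ⋃ v : V, {x : V → ℝ | x v = 1})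
  · rintro x ⟨hx, hx'⟩
    simp only [Set.mem_pi, Set.mem_univ, forall_true_left] at hx hx'
    push_neg at hx'
    obtain ⟨v, hv⟩ := hx'
    have h1 := hx v
    simp only [Set.mem_Icc] at h1
    simp only [Set.mem_Ico] at hv
    have : x v = 1 := by
      rcases lt_or_eq_of_le h1.2 with h|h
      · exact absurd ⟨h1.1, h⟩ hv
      · exact h
    exact Set.mem_iUnion.mpr ⟨v, this⟩
  · apply measure_iUnion_null
    intro v
    rw [volume_pi]
    exact Measure.pi_hyperplane _ v 1

lemma homDensity_W2 {V : Type} [Fintype V] (H : SimpleGraph V) :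
    homDensity H W2 =
      ((Finset.univ.filter fun κ : V → Fin 2 => Good H κ).card : ℝ)
        * (1/2 : ℝ) ^ (Fintype.card V) := by
  have h1 : ∀ x : V → ℝ,
      (∏ e ∈ H.edgeSet.toFinset,
        Sym2.lift ⟨fun i j => W2.toFun (x i) (x j), fun i j => W2.symm (x i) (x j)⟩ e)
      = (Aset H).indicator (fun _ => (1:ℝ)) x := by
    intro x
    have h2 : ∀ e ∈ H.edgeSet.toFinset,
        Sym2.lift ⟨fun i j => W2.toFun (x i) (x j), fun i j => W2.symm (x i) (x j)⟩ e
        = if (Sym2.map (fun v => ⌊2 * x v⌋) e).IsDiag then (1:ℝ) else 0 := by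
      intro e _
      induction e using Sym2.ind with
      | _ i j =>
        rw [Sym2.lift_mk, Sym2.map_pair_eq]
        show (if ⌊2 * x i⌋ = ⌊2 * x j⌋ then (1:ℝ) else 0) = _
        by_cases h : ⌊2 * x i⌋ = ⌊2 * x j⌋
        · rw [if_pos h, if_pos (Sym2.mk_isDiag_iff.mpr h)]
        · rw [if_neg h, if_neg (fun hd => h (Sym2.mk_isDiag_iff.mp hd))]
    rw [Finset.prod_congr rfl h2, Finset.prod_boole]
    by_cases hx : x ∈ Aset H
    · rw [Set.indicator_of_mem hx]; exact if_pos hx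
    · rw [Set.indicator_of_notMem hx]; exact if_neg hx
  have hvol : volume ((Set.univ.pi fun _ : V => Set.Icc (0:ℝ) 1) ∩ Aset H)
      = ((Finset.univ.filter fun κ : V → Fin 2 => Good H κ).card : ENNReal)
        * (2⁻¹ : ENNReal) ^ (Fintype.card V) := by
    have hIcoIcc : volume ((Set.univ.pi fun _ : V => Set.Icc (0:ℝ) 1) ∩ Aset H)
        = volume ((Set.univ.pi fun _ : V => Set.Ico (0:ℝ) 1) ∩ Aset H) := by
      apply le_antisymm
      · have hsub2 : (Set.univ.pi fun _ : V => Set.Icc (0:ℝ) 1) ∩ Aset H ⊆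
            ((Set.univ.pi fun _ : V => Set.Ico (0:ℝ) 1) ∩ Aset H) ∪
            ((Set.univ.pi fun _ : V => Set.Icc (0:ℝ) 1)
              \ (Set.univ.pi fun _ : V => Set.Ico (0:ℝ) 1)) := by
          rintro x ⟨hx, hxA⟩
          by_cases hx' : x ∈ (Set.univ.pi fun _ : V => Set.Ico (0:ℝ) 1)
          · exact Or.inl ⟨hx', hxA⟩
          · exact Or.inr ⟨hx, hx'⟩
        refine le_trans (measure_mono hsub2) ?_
        refine le_trans (measure_union_le _ _) ?_
        rw [volume_Icc_diff_Ico, add_zero]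
      · exact measure_mono (Set.inter_subset_inter_left _
          (Set.pi_mono fun v _ => Set.Ico_subset_Icc_self))
    rw [hIcoIcc, pi_Ico_union, Set.iUnion_inter]
    rw [measure_iUnion
      (fun κ κ' hne => (disjoint_Bset hne).mono Set.inter_subset_left Set.inter_subset_left)
      (fun κ => (measurableSet_Bset κ).inter (measurableSet_Aset H))]
    rw [tsum_fintype]
    have hBA : ∀ κ : V → Fin 2, volume (Bset κ ∩ Aset H)
        = if Good H κ then (2⁻¹ : ENNReal) ^ Fintype.card V else 0 := by
      intro κ
      by_cases hg : Good H κ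
      · rw [if_pos hg, Set.inter_eq_left.mpr (fun x hx => (mem_A_iff_good hx).mpr hg),
          volume_Bset]
      · rw [if_neg hg]
        have : Bset κ ∩ Aset H = ∅ := by
          ext x
          simp only [Set.mem_inter_iff, Set.mem_empty_iff_false, iff_false, not_and]
          exact fun hxB hxA => hg ((mem_A_iff_good hxB).mp hxA)
        rw [this, measure_empty]
    simp_rw [hBA]
    rw [Finset.sum_ite, Finset.sum_const, Finset.sum_const_zero, add_zero, nsmul_eq_mul]
  rw [homDensity]
  simp_rw [h1]
  rw [setIntegral_indicator (measurableSet_Aset H), setIntegral_const, smul_eq_mul, mul_one,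
    measureReal_def, hvol, ENNReal.toReal_mul, ENNReal.toReal_pow, ENNReal.toReal_inv, ENNReal.toReal_ofNat,
    ENNReal.toReal_natCast]
  norm_num

lemma good_const {V : Type} (H : SimpleGraph V) (c : Fin 2) : Good H (fun _ => c) :=
  fun _ _ _ => rfl

lemma count_eq_two {V : Type} [Fintype V] {H : SimpleGraph V} (hH : H.Connected) :
    (Finset.univ.filter fun κ : V → Fin 2 => Good H κ).card = 2 := by
  obtain ⟨v0⟩ := hH.nonempty
  have himage : (Finset.univ.filter fun κ : V → Fin 2 => Good H κ)
      = Finset.image (fun c : Fin 2 => fun _ : V => c) Finset.univ := by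
    ext κ
    simp only [Finset.mem_filter, Finset.mem_univ, true_and, Finset.mem_image]
    constructor
    · intro hg
      refine ⟨κ v0, ?_⟩
      funext u
      show κ v0 = κ u
      obtain ⟨w⟩ := hH.preconnected v0 u
      induction w with
      | nil => rfl
      | cons h p ih => exact (hg _ _ h).trans ih
    · rintro ⟨c, rfl⟩
      exact good_const H c
  rw [himage, Finset.card_image_of_injective _ (fun a b hab => congrFun hab v0),
    Finset.card_univ, Fintype.card_fin]

lemma two_le_count {V : Type} [Fintype V] (H : SimpleGraph V) (hne : Nonempty V) :
    2 ≤ (Finset.univ.filter fun κ : V → Fin 2 => Good H κ).card := by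
  obtain ⟨v0⟩ := hne
  have hsub : Finset.image (fun c : Fin 2 => fun _ : V => c) Finset.univ ⊆
      Finset.univ.filter fun κ : V → Fin 2 => Good H κ := by
    intro κ hκ
    simp only [Finset.mem_image] at hκ
    obtain ⟨c, _, rfl⟩ := hκ
    simp only [Finset.mem_filter, Finset.mem_univ, true_and]
    exact good_const H c
  calc 2 = (Finset.image (fun c : Fin 2 => fun _ : V => c) Finset.univ).card := by
        rw [Finset.card_image_of_injective _ (fun a b hab => congrFun hab v0),
          Finset.card_univ, Fintype.card_fin]
    _ ≤ _ := Finset.card_le_card hsub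


theorem stmt3 {V : Type} [Fintype V] (H : SimpleGraph V)
    (hH : H.Connected) (hdom : IsDominating H)
    {V' : Type} [Fintype V'] (H' : SimpleGraph V')
    (hsub : IsSubgraphOf H' H) (hE : 1 ≤ H'.edgeCard) :
    (H'.edgeCard : ℝ) / ((Fintype.card V' : ℝ) - 1) ≤
      (H.edgeCard : ℝ) / ((Fintype.card V : ℝ) - 1) := by
  obtain ⟨f, hf⟩ := hsub
  obtain ⟨e0, he0⟩ := Finset.card_pos.mp hE
  have hex : ∃ u v, H'.Adj u v := by
    revert he0
    induction e0 using Sym2.ind with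
    | _ u v => intro he0; exact ⟨u, v, by simpa [Set.mem_toFinset] using he0⟩
  obtain ⟨u, v, huv⟩ := hex
  have hHadj : H.Adj (f u) (f v) := f.map_adj huv
  have hEH : 1 ≤ H.edgeCard :=
    Finset.card_pos.mpr ⟨s(f u, f v), by simp [Set.mem_toFinset, hHadj]⟩
  have hV2 : 2 ≤ Fintype.card V := Fintype.one_lt_card_iff_nontrivial.mpr ⟨⟨f u, f v, hHadj.ne⟩⟩
  have hV'2 : 2 ≤ Fintype.card V' := Fintype.one_lt_card_iff_nontrivial.mpr ⟨⟨u, v, huv.ne⟩⟩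
  have hdw := hdom V' H' ⟨f, hf⟩ hE W2
  have h2pow : ∀ m : ℕ, (2:ℝ) * (1/2) ^ m = (2:ℝ) ^ ((1:ℝ) - m) := by
    intro m
    rw [Real.rpow_sub two_pos, Real.rpow_one, Real.rpow_natCast, div_pow, one_pow, mul_one_div]
  have ht : homDensity H W2 = (2:ℝ) ^ ((1:ℝ) - Fintype.card V) := by
    rw [homDensity_W2, count_eq_two hH]
    push_cast
    exact h2pow _
  have ht' : (2:ℝ) ^ ((1:ℝ) - Fintype.card V') ≤ homDensity H' W2 := by
    rw [homDensity_W2, ← h2pow]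
    have hcard : (2:ℝ) ≤ ((Finset.univ.filter fun κ : V' → Fin 2 => Good H' κ).card : ℝ) := by
      exact_mod_cast two_le_count H' ⟨u⟩
    exact mul_le_mul_of_nonneg_right hcard (by positivity)
  have he : (1:ℝ) ≤ (H.edgeCard : ℝ) := by exact_mod_cast hEH
  have he' : (1:ℝ) ≤ (H'.edgeCard : ℝ) := by exact_mod_cast hE
  have key : (2:ℝ) ^ (((1:ℝ) - Fintype.card V')/(H'.edgeCard : ℝ))
      ≤ (2:ℝ) ^ (((1:ℝ) - Fintype.card V)/(H.edgeCard : ℝ)) := by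
    have step1 : (2:ℝ) ^ (((1:ℝ) - Fintype.card V')/(H'.edgeCard : ℝ))
        = ((2:ℝ) ^ ((1:ℝ) - (Fintype.card V' : ℝ))) ^ ((1:ℝ)/(H'.edgeCard : ℝ)) := by
      rw [← Real.rpow_mul (by norm_num), mul_one_div]
    have step2 : ((2:ℝ) ^ ((1:ℝ) - (Fintype.card V : ℝ))) ^ ((1:ℝ)/(H.edgeCard : ℝ))
        = (2:ℝ) ^ (((1:ℝ) - Fintype.card V)/(H.edgeCard : ℝ)) := by
      rw [← Real.rpow_mul (by norm_num), mul_one_div]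
    rw [step1, ← step2, ← ht]
    exact le_trans (Real.rpow_le_rpow (Real.rpow_nonneg (by norm_num) _) ht' (by positivity)) hdw
  have hle := (Real.rpow_le_rpow_left_iff (by norm_num : (1:ℝ) < 2)).mp key
  rw [div_le_div_iff₀ (by linarith) (by linarith)] at hle
  have hv : (2:ℝ) ≤ (Fintype.card V : ℝ) := by exact_mod_cast hV2
  have hv' : (2:ℝ) ≤ (Fintype.card V' : ℝ) := by exact_mod_cast hV'2
  rw [div_le_div_iff₀ (by linarith) (by linarith)]
  nlinarith [hle]
end

section
/- Let H be a connected dominating bipartite graph whose two sides A and B satisfy |A| = |B|. Then H is regular. -/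
open MeasureTheory
open scoped Classical

namespace Stmt5Aux

open MeasureTheory
open scoped Classical

noncomputable section

variable {V : Type} [Fintype V]

/-- The unit box in `V → ℝ`. -/
def box (V : Type) [Fintype V] : Set (V → ℝ) := Set.univ.pi fun _ : V => Set.Icc (0:ℝ) 1

lemma measurableSet_box : MeasurableSet (box V) :=
  MeasurableSet.univ_pi fun _ => measurableSet_Icc

lemma volume_box : volume (box V) = 1 := by
  rw [box, volume_pi_pi]
  simp [Real.volume_Icc]

instance : IsFiniteMeasure ((volume : Measure (V → ℝ)).restrict (box V)) := by
  constructor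
  rw [Measure.restrict_apply_univ, volume_box]
  exact ENNReal.one_lt_top

/-- The integrand in `homDensity`/`subDensity`. -/
def intg (W : Graphon) (J : Finset (Sym2 V)) : (V → ℝ) → ℝ :=
  fun x => ∏ e ∈ J,
    Sym2.lift ⟨fun i j => W.toFun (x i) (x j), fun i j => W.symm (x i) (x j)⟩ e

lemma homDensity_eq (H : SimpleGraph V) (W : Graphon) :
    homDensity H W = ∫ x in box V, intg W H.edgeSet.toFinset x := rfl

lemma measurable_factor (W : Graphon) (e : Sym2 V) :
    Measurable fun x : V → ℝ =>
      Sym2.lift ⟨fun i j => W.toFun (x i) (x j), fun i j => W.symm (x i) (x j)⟩ e := by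
  induction e using Sym2.ind with
  | _ i j =>
    simp only [Sym2.lift_mk]
    have h : Measurable fun p : ℝ × ℝ => W.toFun p.1 p.2 := by
      exact W.measurable'
    have e : (fun x : V → ℝ => W.toFun (x i) (x j))
        = (fun p : ℝ × ℝ => W.toFun p.1 p.2) ∘ (fun x => (x i, x j)) := rfl
    rw [e]
    exact h.comp ((measurable_pi_apply i).prodMk (measurable_pi_apply j))

lemma factor_nonneg (W : Graphon) (e : Sym2 V) (x : V → ℝ) :
    0 ≤ Sym2.lift ⟨fun i j => W.toFun (x i) (x j), fun i j => W.symm (x i) (x j)⟩ e := by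
  induction e using Sym2.ind with
  | _ i j => simpa using W.nonneg (x i) (x j)

lemma factor_le_one (W : Graphon) (e : Sym2 V) (x : V → ℝ) :
    Sym2.lift ⟨fun i j => W.toFun (x i) (x j), fun i j => W.symm (x i) (x j)⟩ e ≤ 1 := by
  induction e using Sym2.ind with
  | _ i j => simpa using W.le_one (x i) (x j)

lemma measurable_intg (W : Graphon) (J : Finset (Sym2 V)) : Measurable (intg W J) :=
  Finset.measurable_prod _ fun e _ => measurable_factor W e

lemma intg_nonneg (W : Graphon) (J : Finset (Sym2 V)) (x : V → ℝ) : 0 ≤ intg W J x :=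
  Finset.prod_nonneg fun e _ => factor_nonneg W e x

lemma intg_le_one (W : Graphon) (J : Finset (Sym2 V)) (x : V → ℝ) : intg W J x ≤ 1 :=
  Finset.prod_le_one (fun e _ => factor_nonneg W e x) (fun e _ => factor_le_one W e x)

lemma integrableOn_intg (W : Graphon) (J : Finset (Sym2 V)) :
    IntegrableOn (intg W J) (box V) := by
  apply Measure.integrableOn_of_bounded (M := 1)
  · rw [volume_box]; exact ENNReal.one_ne_top
  · exact (measurable_intg W J).aestronglyMeasurable
  · refine Filter.Eventually.of_forall fun x => ?_
    rw [Real.norm_eq_abs, abs_le]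
    exact ⟨by linarith [intg_nonneg W J x], intg_le_one W J x⟩

lemma homDensity_nonneg (H : SimpleGraph V) (W : Graphon) : 0 ≤ homDensity H W := by
  rw [homDensity_eq]
  exact setIntegral_nonneg measurableSet_box fun x _ => intg_nonneg W _ x

/-- The step graphon: indicator of `([0,δ] × (1/2,∞)) ∪ ((1/2,∞) × [0,δ])`. -/
def stepW (δ : ℝ) : Graphon where
  toFun x y := if (x ≤ δ ∧ 1/2 < y) ∨ (y ≤ δ ∧ 1/2 < x) then 1 else 0
  symm x y := if_congr or_comm rfl rfl
  measurable' := by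
    have hs : MeasurableSet {p : ℝ × ℝ |
        (p.1 ≤ δ ∧ 1/2 < p.2) ∨ (p.2 ≤ δ ∧ 1/2 < p.1)} := by
      apply MeasurableSet.union
      · exact (measurableSet_le measurable_fst measurable_const).inter
          (measurableSet_lt measurable_const measurable_snd)
      · exact (measurableSet_le measurable_snd measurable_const).inter
          (measurableSet_lt measurable_const measurable_fst)
    have : Function.uncurry (fun x y : ℝ =>
        if (x ≤ δ ∧ 1/2 < y) ∨ (y ≤ δ ∧ 1/2 < x) then (1:ℝ) else 0)
        = fun p : ℝ × ℝ =>
          if (p.1 ≤ δ ∧ 1/2 < p.2) ∨ (p.2 ≤ δ ∧ 1/2 < p.1) then (1:ℝ) else 0 := rfl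
    rw [this]
    exact Measurable.ite hs measurable_const measurable_const
  nonneg x y := by split <;> norm_num
  le_one x y := by split <;> norm_num

lemma stepW_eq_one {δ x y : ℝ} (h : (x ≤ δ ∧ 1/2 < y) ∨ (y ≤ δ ∧ 1/2 < x)) :
    (stepW δ).toFun x y = 1 := by simp only [stepW, if_pos h]

lemma stepW_cases {δ x y : ℝ} (h : (stepW δ).toFun x y ≠ 0) :
    (x ≤ δ ∧ 1/2 < y) ∨ (y ≤ δ ∧ 1/2 < x) := by
  by_contra hc
  exact h (by simp only [stepW, if_neg hc])

/-- The star at `v` inside `H`, as a graph on the same vertex set. -/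
def starAt (H : SimpleGraph V) (v : V) : SimpleGraph V where
  Adj a b := H.Adj a b ∧ (a = v ∨ b = v)
  symm := ⟨fun a b h => ⟨h.1.symm, h.2.symm⟩⟩
  loopless := ⟨fun a h => H.loopless.irrefl a h.1⟩

lemma starAt_edgeSet (H : SimpleGraph V) (v : V) :
    (starAt H v).edgeSet = H.incidenceSet v := by
  ext e
  induction e using Sym2.ind with
  | _ a b =>
    simp only [SimpleGraph.mem_edgeSet, SimpleGraph.incidenceSet, Set.mem_setOf_eq,
      SimpleGraph.mem_edgeSet, Sym2.mem_iff, starAt]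
    constructor
    · rintro ⟨h, h2⟩; exact ⟨h, by tauto⟩
    · rintro ⟨h, h2⟩; exact ⟨h, by tauto⟩

lemma starAt_edgeCard (H : SimpleGraph V) (v : V) :
    (starAt H v).edgeCard = H.degree v := by
  classical
  rw [SimpleGraph.edgeCard, Set.toFinset_card]
  rw [← SimpleGraph.card_incidenceFinset_eq_degree H v, SimpleGraph.incidenceFinset,
    Set.toFinset_card]
  exact Fintype.card_congr (Equiv.setCongr (starAt_edgeSet H v))

/-- The identity is an injective hom from the star into `H`. -/
lemma starAt_isSubgraph (H : SimpleGraph V) (v : V) : IsSubgraphOf (starAt H v) H :=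
  ⟨⟨id, fun h => h.1⟩, fun _ _ h => h⟩

lemma sum_degree_eq_edgeCard (H : SimpleGraph V) (A : Set V)
    (hbip : ∀ v w, H.Adj v w → (v ∈ A ↔ w ∉ A)) :
    ∑ v ∈ A.toFinset, H.degree v = H.edgeCard := by
  classical
  have hU : H.edgeSet.toFinset = A.toFinset.biUnion (fun v => H.incidenceFinset v) := by
    ext e
    induction e using Sym2.ind with
    | _ a b =>
      simp only [Set.mem_toFinset, SimpleGraph.mem_edgeSet, Finset.mem_biUnion,
        SimpleGraph.mem_incidenceFinset, SimpleGraph.incidenceSet, Set.mem_setOf_eq,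
        SimpleGraph.mem_edgeSet, Sym2.mem_iff]
      constructor
      · intro h
        by_cases ha : a ∈ A
        · exact ⟨a, ha, h, Or.inl rfl⟩
        · have hb : b ∈ A := by have := hbip a b h; tauto
          exact ⟨b, hb, h, Or.inr rfl⟩
      · rintro ⟨v, _, h, _⟩; exact h
  have hdisj : ∀ x ∈ A.toFinset, ∀ y ∈ A.toFinset, x ≠ y →
      Disjoint (H.incidenceFinset x) (H.incidenceFinset y) := by
    intro x hx y hy hxy
    rw [Finset.disjoint_left]
    intro e hex hey
    rw [SimpleGraph.mem_incidenceFinset] at hex hey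
    have hxe : x ∈ e := hex.2
    have hye : y ∈ e := hey.2
    have : e = s(x, y) := (Sym2.mem_and_mem_iff hxy).mp ⟨hxe, hye⟩
    rw [this] at hex
    have hadj : H.Adj x y := hex.1
    have := hbip x y hadj
    rw [Set.mem_toFinset] at hx hy
    tauto
  rw [SimpleGraph.edgeCard, hU, Finset.card_biUnion hdisj]
  exact Finset.sum_congr rfl fun v _ => (SimpleGraph.card_incidenceFinset_eq_degree H v).symm

lemma walk_parity (H : SimpleGraph V) (A T : Set V)
    (hbip : ∀ u w, H.Adj u w → (u ∈ A ↔ w ∉ A))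
    (hT : ∀ u w, H.Adj u w → (u ∈ T ↔ w ∉ T))
    {u w : V} (p : H.Walk u w) : ((u ∈ A ↔ w ∈ A) ↔ (u ∈ T ↔ w ∈ T)) := by
  induction p with
  | nil => tauto
  | cons h q ih =>
    have h1 := hbip _ _ h
    have h2 := hT _ _ h
    tauto

lemma support_cases (H : SimpleGraph V) (A : Set V) (hconn : H.Connected)
    (hbip : ∀ u w, H.Adj u w → (u ∈ A ↔ w ∉ A))
    {δ : ℝ} (hδ : δ ≤ 1/2)
    (hedge : ∃ u w, H.Adj u w)
    (x : V → ℝ) (hx : intg (stepW δ) H.edgeSet.toFinset x ≠ 0) :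
    (∀ v ∈ A, x v ≤ δ) ∨ (∀ v ∉ A, x v ≤ δ) := by
  have hP : ∀ u w, H.Adj u w → ((x u ≤ δ ∧ 1/2 < x w) ∨ (x w ≤ δ ∧ 1/2 < x u)) := by
    intro u w h
    have hmem : s(u, w) ∈ H.edgeSet.toFinset := by
      rw [Set.mem_toFinset]; exact h
    by_contra hc
    apply hx
    apply Finset.prod_eq_zero hmem
    rw [Sym2.lift_mk]
    exact if_neg hc
  set T : Set V := {u | x u ≤ δ} with hTdef
  have hmemT : ∀ u, u ∈ T ↔ x u ≤ δ := fun u => Iff.rfl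
  have hT : ∀ u w, H.Adj u w → (u ∈ T ↔ w ∉ T) := by
    intro u w h
    rcases hP u w h with ⟨h1, h2⟩ | ⟨h1, h2⟩
    · have hu : u ∈ T := h1
      have hw : w ∉ T := fun hw => absurd h2 (not_lt.mpr (le_trans (hmemT w |>.mp hw) hδ))
      tauto
    · have hu : u ∉ T := fun hu => absurd h2 (not_lt.mpr (le_trans (hmemT u |>.mp hu) hδ))
      have hw : w ∈ T := h1
      tauto
  obtain ⟨u0, w0, h0⟩ := hedge
  have ht0 : ∃ t0, t0 ∈ T := by
    rcases hP u0 w0 h0 with ⟨h1, _⟩ | ⟨h1, _⟩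
    · exact ⟨u0, h1⟩
    · exact ⟨w0, h1⟩
  obtain ⟨t0, ht0⟩ := ht0
  have key : ∀ z, (t0 ∈ A ↔ z ∈ A) → z ∈ T := by
    intro z hz
    have hr := hconn.preconnected t0 z
    refine hr.elim fun p => ?_
    have := walk_parity H A T hbip hT p
    tauto
  by_cases hA : t0 ∈ A
  · exact Or.inl fun v hv => key v (by tauto)
  · exact Or.inr fun v hv => key v (by tauto)

lemma volume_pi_ite (p : V → Prop) [DecidablePred p] {δ : ℝ} (h0 : 0 ≤ δ) :
    volume (Set.univ.pi fun v => if p v then Set.Icc (0:ℝ) δ else Set.Icc (0:ℝ) 1)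
      = ENNReal.ofReal δ ^ (Finset.univ.filter p).card := by
  rw [volume_pi_pi]
  have h1 : ∀ v : V, volume (if p v then Set.Icc (0:ℝ) δ else Set.Icc (0:ℝ) 1)
      = if p v then ENNReal.ofReal δ else 1 := by
    intro v; split <;> simp [Real.volume_Icc]
  rw [Finset.prod_congr rfl fun v _ => h1 v, Finset.prod_ite, Finset.prod_const,
    Finset.prod_const, one_pow, mul_one]

lemma measurable_pi_ite (p : V → Prop) [DecidablePred p] (δ : ℝ) :
    MeasurableSet (Set.univ.pi fun v => if p v then Set.Icc (0:ℝ) δ else Set.Icc (0:ℝ) 1) :=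
  MeasurableSet.univ_pi fun v => by split <;> exact measurableSet_Icc

lemma homDensity_upper (H : SimpleGraph V) (A : Set V) (hconn : H.Connected)
    (hbip : ∀ u w, H.Adj u w → (u ∈ A ↔ w ∉ A))
    (hedge : ∃ u w, H.Adj u w)
    {δ : ℝ} (h0 : 0 < δ) (hδ : δ ≤ 1/2) :
    homDensity H (stepW δ) ≤ δ ^ A.toFinset.card + δ ^ Aᶜ.toFinset.card := by
  set SA := Set.univ.pi fun v => if v ∈ A then Set.Icc (0:ℝ) δ else Set.Icc (0:ℝ) 1 with hSA
  set SB := Set.univ.pi fun v => if v ∉ A then Set.Icc (0:ℝ) δ else Set.Icc (0:ℝ) 1 with hSB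
  have hmA : MeasurableSet SA := by rw [hSA]; exact measurable_pi_ite _ δ
  have hmB : MeasurableSet SB := by rw [hSB]; exact measurable_pi_ite _ δ
  have hpoint : ∀ x ∈ box V, intg (stepW δ) H.edgeSet.toFinset x
      ≤ (SA ∪ SB).indicator (fun _ => (1:ℝ)) x := by
    intro x hx
    by_cases hz : intg (stepW δ) H.edgeSet.toFinset x = 0
    · rw [hz]
      exact Set.indicator_nonneg (fun _ _ => zero_le_one) x
    · have hcase := support_cases H A hconn hbip hδ hedge x hz
      have hxmem : x ∈ SA ∪ SB := by
        rcases hcase with hc | hc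
        · left
          intro v _
          dsimp only
          by_cases hv : v ∈ A
          · rw [if_pos hv]; exact ⟨(hx v (Set.mem_univ v)).1, hc v hv⟩
          · rw [if_neg hv]; exact hx v (Set.mem_univ v)
        · right
          intro v _
          dsimp only
          by_cases hv : v ∉ A
          · rw [if_pos hv]; exact ⟨(hx v (Set.mem_univ v)).1, hc v hv⟩
          · rw [if_neg hv]; exact hx v (Set.mem_univ v)
      rw [Set.indicator_of_mem hxmem]
      exact intg_le_one _ _ x
  have hint : IntegrableOn ((SA ∪ SB).indicator (fun _ => (1:ℝ))) (box V) volume :=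
    (integrable_const (1:ℝ)).indicator (hmA.union hmB)
  have h2 : homDensity H (stepW δ)
      ≤ ∫ x in box V, (SA ∪ SB).indicator (fun _ => (1:ℝ)) x := by
    rw [homDensity_eq]
    exact setIntegral_mono_on (integrableOn_intg _ _) hint measurableSet_box hpoint
  have h3 : ∫ x in box V, (SA ∪ SB).indicator (fun _ => (1:ℝ)) x
      = ((volume.restrict (box V)) (SA ∪ SB)).toReal := by
    rw [integral_indicator_const (1:ℝ) (hmA.union hmB), smul_eq_mul, mul_one, measureReal_def]
  have hcA : (Finset.univ.filter (fun v => v ∈ A)).card = A.toFinset.card := by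
    congr 1; ext v; simp
  have hcB : (Finset.univ.filter (fun v => v ∉ A)).card = Aᶜ.toFinset.card := by
    congr 1; ext v; simp
  have h4 : (volume.restrict (box V)) (SA ∪ SB)
      ≤ ENNReal.ofReal δ ^ A.toFinset.card + ENNReal.ofReal δ ^ Aᶜ.toFinset.card := by
    rw [Measure.restrict_apply (hmA.union hmB)]
    calc volume ((SA ∪ SB) ∩ box V) ≤ volume (SA ∪ SB) :=
          measure_mono Set.inter_subset_left
      _ ≤ volume SA + volume SB := measure_union_le SA SB
      _ = _ := by
          rw [hSA, hSB, volume_pi_ite _ h0.le, volume_pi_ite _ h0.le, hcA, hcB]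
  have hfin : (ENNReal.ofReal δ ^ A.toFinset.card + ENNReal.ofReal δ ^ Aᶜ.toFinset.card) ≠ ⊤ := by
    exact ENNReal.add_ne_top.mpr ⟨ENNReal.pow_ne_top ENNReal.ofReal_ne_top,
      ENNReal.pow_ne_top ENNReal.ofReal_ne_top⟩
  have h5 := ENNReal.toReal_mono hfin h4
  rw [ENNReal.toReal_add (ENNReal.pow_ne_top ENNReal.ofReal_ne_top)
      (ENNReal.pow_ne_top ENNReal.ofReal_ne_top), ENNReal.toReal_pow, ENNReal.toReal_pow,
    ENNReal.toReal_ofReal h0.le] at h5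
  calc homDensity H (stepW δ) ≤ _ := h2
    _ = _ := h3
    _ ≤ _ := h5

lemma homDensity_star_lower (H : SimpleGraph V) (v : V)
    {δ : ℝ} (h0 : 0 < δ) (hδ : δ ≤ 1/2) :
    δ * (1/2) ^ H.degree v ≤ homDensity (starAt H v) (stepW δ) := by
  classical
  set R := Set.univ.pi fun u => if u = v then Set.Icc (0:ℝ) δ
      else if H.Adj v u then Set.Ioc (1/2:ℝ) 1 else Set.Icc (0:ℝ) 1 with hR
  have hmR : MeasurableSet R := MeasurableSet.univ_pi fun u => by
    split
    · exact measurableSet_Icc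
    · split
      · exact measurableSet_Ioc
      · exact measurableSet_Icc
  have hRbox : R ⊆ box V := by
    intro x hx u hu
    have := hx u (Set.mem_univ u)
    dsimp only at this
    split at this
    · exact ⟨this.1, le_trans this.2 (by linarith)⟩
    · split at this
      · exact ⟨le_of_lt (lt_of_le_of_lt (by norm_num) this.1), this.2⟩
      · exact this
  have hpoint : ∀ x ∈ box V, R.indicator (fun _ => (1:ℝ)) x
      ≤ intg (stepW δ) (starAt H v).edgeSet.toFinset x := by
    intro x _
    by_cases hxR : x ∈ R
    · rw [Set.indicator_of_mem hxR]
      refine le_of_eq (Finset.prod_eq_one fun e he => ?_).symm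
      rw [Set.mem_toFinset] at he
      induction e using Sym2.ind with
      | _ a b =>
        have hadj : (starAt H v).Adj a b := he
        obtain ⟨hab, hcase⟩ := hadj
        have hxv : x v ≤ δ := by
          have := hxR v (Set.mem_univ v)
          dsimp only at this
          rw [if_pos rfl] at this
          exact this.2
        rw [Sym2.lift_mk]
        rcases hcase with rfl | rfl
        · have hbv : ¬ b = a := fun h => H.loopless.irrefl a (h ▸ hab)
          have hb := hxR b (Set.mem_univ b)
          dsimp only at hb
          rw [if_neg hbv, if_pos hab] at hb
          exact stepW_eq_one (Or.inl ⟨hxv, hb.1⟩)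
        · have hav : ¬ a = b := fun h => H.loopless.irrefl b (h ▸ hab)
          have ha := hxR a (Set.mem_univ a)
          dsimp only at ha
          rw [if_neg hav, if_pos hab.symm] at ha
          exact stepW_eq_one (Or.inr ⟨hxv, ha.1⟩)
    · rw [Set.indicator_of_notMem hxR]
      exact intg_nonneg _ _ x
  have hint : IntegrableOn (R.indicator (fun _ => (1:ℝ))) (box V) volume :=
    (integrable_const (1:ℝ)).indicator hmR
  have h2 : ∫ x in box V, R.indicator (fun _ => (1:ℝ)) x ≤ homDensity (starAt H v) (stepW δ) := by
    rw [homDensity_eq]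
    exact setIntegral_mono_on hint (integrableOn_intg _ _) measurableSet_box hpoint
  have h3 : ∫ x in box V, R.indicator (fun _ => (1:ℝ)) x = (volume R).toReal := by
    rw [integral_indicator_const (1:ℝ) hmR, smul_eq_mul, mul_one,
      measureReal_def, Measure.restrict_apply hmR, Set.inter_eq_self_of_subset_left hRbox]
  have h4 : volume R = ENNReal.ofReal δ * ENNReal.ofReal (1/2) ^ H.degree v := by
    rw [hR, volume_pi_pi]
    have h5 : ∀ u : V, volume (if u = v then Set.Icc (0:ℝ) δ
        else if H.Adj v u then Set.Ioc (1/2:ℝ) 1 else Set.Icc (0:ℝ) 1)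
        = if u = v then ENNReal.ofReal δ
          else if H.Adj v u then ENNReal.ofReal (1/2) else 1 := by
      intro u
      split
      · simp [Real.volume_Icc]
      · split
        · rw [Real.volume_Ioc]; norm_num
        · simp [Real.volume_Icc]
    rw [Finset.prod_congr rfl fun u _ => h5 u]
    rw [← Finset.mul_prod_erase Finset.univ _ (Finset.mem_univ v), if_pos rfl]
    congr 1
    have h6 : ∀ u ∈ Finset.univ.erase v,
        (if u = v then ENNReal.ofReal δ else if H.Adj v u then ENNReal.ofReal (1/2) else 1)
        = (if H.Adj v u then ENNReal.ofReal (1/2) else 1) := by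
      intro u hu
      rw [if_neg (Finset.mem_erase.mp hu).1]
    rw [Finset.prod_congr rfl h6,
      Finset.prod_erase Finset.univ (by rw [if_neg (H.irrefl)]),
      Finset.prod_ite, Finset.prod_const, Finset.prod_const, one_pow, mul_one]
    congr 1
    rw [SimpleGraph.degree]
    congr 1
    ext u
    simp [SimpleGraph.mem_neighborFinset]
  calc δ * (1/2) ^ H.degree v
      = (ENNReal.ofReal δ * ENNReal.ofReal (1/2) ^ H.degree v).toReal := by
        rw [ENNReal.toReal_mul, ENNReal.toReal_pow, ENNReal.toReal_ofReal h0.le,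
          ENNReal.toReal_ofReal (by norm_num)]
    _ = (volume R).toReal := by rw [h4]
    _ = ∫ x in box V, R.indicator (fun _ => (1:ℝ)) x := h3.symm
    _ ≤ _ := h2

lemma star_bound (H : SimpleGraph V) (hconn : H.Connected) (hdom : IsDominating H)
    (A : Set V) (hbip : ∀ u w, H.Adj u w → (u ∈ A ↔ w ∉ A))
    (hsize : Nat.card ↥A = Nat.card ↥(Aᶜ))
    (v : V) (hv : v ∈ A) (w0 : V) (hvw : H.Adj v w0) :
    Nat.card ↥A * H.degree v ≤ H.edgeCard := by
  classical
  have hacard : Nat.card ↥A = A.toFinset.card := by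
    rw [Nat.card_coe_set_eq, Set.ncard_eq_toFinset_card']
  have hsz : A.toFinset.card = Aᶜ.toFinset.card := by
    rw [← hacard, hsize, Nat.card_coe_set_eq, Set.ncard_eq_toFinset_card']
  rw [hacard]
  set Δ := H.degree v with hΔdef
  set m := H.edgeCard with hmdef
  set a := A.toFinset.card with hadef
  have hΔpos : 0 < Δ := (H.degree_pos_iff_exists_adj v).mpr ⟨w0, hvw⟩
  have hapos : 0 < a := Finset.card_pos.mpr ⟨v, Set.mem_toFinset.mpr hv⟩
  have hmpos : 0 < m := by
    rw [hmdef, SimpleGraph.edgeCard]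
    exact Finset.card_pos.mpr ⟨s(v, w0), Set.mem_toFinset.mpr hvw⟩
  have hedge : ∃ u w, H.Adj u w := ⟨v, w0, hvw⟩
  have hcard : (starAt H v).edgeCard = Δ := starAt_edgeCard H v
  have hdom' := hdom V (starAt H v) (starAt_isSubgraph H v) (by rw [hcard]; exact hΔpos)
  by_contra hcon
  push_neg at hcon
  have hΔR : (0:ℝ) < (Δ:ℝ) := by exact_mod_cast hΔpos
  have hmR : (0:ℝ) < (m:ℝ) := by exact_mod_cast hmpos
  have hq : 0 < (a:ℝ)/(m:ℝ) - 1/(Δ:ℝ) := by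
    rw [sub_pos, div_lt_div_iff₀ hΔR hmR]
    have : (m:ℝ) < (a:ℝ) * (Δ:ℝ) := by exact_mod_cast hcon
    linarith
  set q := (a:ℝ)/(m:ℝ) - 1/(Δ:ℝ) with hqdef
  set δ := min (1/2 : ℝ) ((8:ℝ)⁻¹ ^ ((1:ℝ)/q)) with hδdef
  have hδpos : 0 < δ := lt_min (by norm_num) (Real.rpow_pos_of_pos (by norm_num) _)
  have hδhalf : δ ≤ 1/2 := min_le_left _ _
  -- the domination inequality for `stepW δ`
  have h1 := hdom' (stepW δ)
  rw [hcard] at h1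
  have hL := homDensity_star_lower H v hδpos hδhalf
  have hU := homDensity_upper H A hconn hbip hedge hδpos hδhalf
  rw [← hsz] at hU
  have key : (δ * (1/2) ^ Δ) ^ ((1:ℝ)/(Δ:ℝ)) ≤ (δ^a + δ^a) ^ ((1:ℝ)/(m:ℝ)) := by
    calc (δ * (1/2) ^ Δ) ^ ((1:ℝ)/(Δ:ℝ))
        ≤ homDensity (starAt H v) (stepW δ) ^ ((1:ℝ)/(Δ:ℝ)) :=
          Real.rpow_le_rpow (by positivity) hL (by positivity)
      _ ≤ homDensity H (stepW δ) ^ ((1:ℝ)/(m:ℝ)) := h1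
      _ ≤ (δ^a + δ^a) ^ ((1:ℝ)/(m:ℝ)) :=
          Real.rpow_le_rpow (homDensity_nonneg H _) hU (by positivity)
  have hΔne : ((Δ:ℝ)) ≠ 0 := ne_of_gt hΔR
  have e1 : (δ * (1/2) ^ Δ) ^ ((1:ℝ)/(Δ:ℝ)) = δ ^ ((1:ℝ)/(Δ:ℝ)) * (1/2) := by
    rw [Real.mul_rpow hδpos.le (by positivity), ← Real.rpow_natCast (1/2:ℝ) Δ,
      ← Real.rpow_mul (by norm_num : (0:ℝ) ≤ 1/2)]
    rw [mul_one_div, div_self hΔne, Real.rpow_one]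
  have e2 : (δ^a + δ^a) ^ ((1:ℝ)/(m:ℝ)) = (2:ℝ) ^ ((1:ℝ)/(m:ℝ)) * δ ^ ((a:ℝ)/(m:ℝ)) := by
    have h2 : δ^a + δ^a = 2 * δ^a := by ring
    rw [h2, Real.mul_rpow (by norm_num) (by positivity), ← Real.rpow_natCast δ a,
      ← Real.rpow_mul hδpos.le]
    rw [mul_one_div]
  have e3 : (2:ℝ) ^ ((1:ℝ)/(m:ℝ)) ≤ 2 := by
    have h2 : (1:ℝ)/(m:ℝ) ≤ 1 := by
      rw [div_le_one hmR]
      exact_mod_cast hmpos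
    calc (2:ℝ) ^ ((1:ℝ)/(m:ℝ)) ≤ (2:ℝ) ^ (1:ℝ) :=
          Real.rpow_le_rpow_of_exponent_le one_le_two h2
      _ = 2 := Real.rpow_one 2
  have e4 : δ ^ ((a:ℝ)/(m:ℝ)) = δ ^ ((1:ℝ)/(Δ:ℝ)) * δ ^ q := by
    rw [← Real.rpow_add hδpos]
    congr 1
    rw [hqdef]; ring
  have hXpos : 0 < δ ^ ((1:ℝ)/(Δ:ℝ)) := Real.rpow_pos_of_pos hδpos _
  have h6 : δ ^ ((1:ℝ)/(Δ:ℝ)) * (1/2) ≤ δ ^ ((1:ℝ)/(Δ:ℝ)) * (2 * δ ^ q) := by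
    calc δ ^ ((1:ℝ)/(Δ:ℝ)) * (1/2) = (δ * (1/2) ^ Δ) ^ ((1:ℝ)/(Δ:ℝ)) := e1.symm
      _ ≤ (δ^a + δ^a) ^ ((1:ℝ)/(m:ℝ)) := key
      _ = (2:ℝ) ^ ((1:ℝ)/(m:ℝ)) * δ ^ ((a:ℝ)/(m:ℝ)) := e2
      _ ≤ 2 * δ ^ ((a:ℝ)/(m:ℝ)) :=
          mul_le_mul_of_nonneg_right e3 (Real.rpow_nonneg hδpos.le _)
      _ = δ ^ ((1:ℝ)/(Δ:ℝ)) * (2 * δ ^ q) := by rw [e4]; ring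
  have h7 : (1:ℝ)/2 ≤ 2 * δ ^ q := le_of_mul_le_mul_left h6 hXpos
  have h8 : δ ^ q ≤ 8⁻¹ := by
    calc δ ^ q ≤ ((8:ℝ)⁻¹ ^ ((1:ℝ)/q)) ^ q :=
          Real.rpow_le_rpow hδpos.le (min_le_right _ _) hq.le
      _ = 8⁻¹ := by
          rw [← Real.rpow_mul (by norm_num : (0:ℝ) ≤ 8⁻¹), one_div_mul_cancel hq.ne',
            Real.rpow_one]
  linarith

end

end Stmt5Aux

theorem stmt5 {V : Type} [Fintype V] (H : SimpleGraph V)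
    (hH : H.Connected) (hdom : IsDominating H)
    (A : Set V)
    (hbip : ∀ v w, H.Adj v w → (v ∈ A ↔ w ∉ A))
    (hsize : Nat.card A = Nat.card ↥(Aᶜ)) :
    ∃ d : ℕ, H.IsRegularOfDegree d := by
  classical
  open Stmt5Aux in
  by_cases hE : ∃ u w, H.Adj u w
  · obtain ⟨u0, w0, h0⟩ := hE
    have hAC : ∀ u w, H.Adj u w → (u ∈ Aᶜ ↔ w ∉ Aᶜ) := by
      intro u w h
      have := hbip u w h
      simp only [Set.mem_compl_iff]
      tauto
    have hsz : A.toFinset.card = Aᶜ.toFinset.card := by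
      have h1 : Nat.card ↥A = A.toFinset.card := by
        rw [Nat.card_coe_set_eq, Set.ncard_eq_toFinset_card']
      have h2 : Nat.card ↥(Aᶜ) = Aᶜ.toFinset.card := by
        rw [Nat.card_coe_set_eq, Set.ncard_eq_toFinset_card']
      rw [← h1, ← h2, hsize]
    have hszC : Nat.card ↥(Aᶜ) = Nat.card ↥(Aᶜᶜ) := by
      rw [compl_compl]; exact hsize.symm
    have hadj : ∀ u : V, ∃ z, H.Adj u z := by
      intro u
      have hr := hH.preconnected u u0
      refine hr.elim fun p => ?_
      cases p with
      | nil => exact ⟨w0, h0⟩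
      | cons h _ => exact ⟨_, h⟩
    have hsumA := Stmt5Aux.sum_degree_eq_edgeCard H A hbip
    have hA : ∀ v ∈ A.toFinset, Nat.card ↥A * H.degree v ≤ H.edgeCard := by
      intro v hv
      obtain ⟨z, hz⟩ := hadj v
      exact Stmt5Aux.star_bound H hH hdom A hbip hsize v (Set.mem_toFinset.mp hv) z hz
    have hB : ∀ v ∈ Aᶜ.toFinset, Nat.card ↥(Aᶜ) * H.degree v ≤ H.edgeCard := by
      intro v hv
      obtain ⟨z, hz⟩ := hadj v
      exact Stmt5Aux.star_bound H hH hdom Aᶜ hAC hszC v (Set.mem_toFinset.mp hv) z hz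
    have hsumB : ∑ v ∈ Aᶜ.toFinset, H.degree v = H.edgeCard := by
      rw [← Stmt5Aux.sum_degree_eq_edgeCard H Aᶜ hAC]
      exact Finset.sum_congr (by ext w; simp [Set.mem_toFinset]) (fun _ _ => rfl)
    have hacard : Nat.card ↥A = A.toFinset.card := by
      rw [Nat.card_coe_set_eq, Set.ncard_eq_toFinset_card']
    have hbcard : Nat.card ↥(Aᶜ) = Aᶜ.toFinset.card := by
      rw [Nat.card_coe_set_eq, Set.ncard_eq_toFinset_card']
    have hAeq : ∀ v ∈ A.toFinset, Nat.card ↥A * H.degree v = H.edgeCard := by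
      intro v hv
      by_contra hne
      have hlt : Nat.card ↥A * H.degree v < H.edgeCard := lt_of_le_of_ne (hA v hv) hne
      have hs : ∑ w ∈ A.toFinset, (Nat.card ↥A * H.degree w)
          < ∑ _w ∈ A.toFinset, H.edgeCard :=
        Finset.sum_lt_sum (fun w hw => hA w hw) ⟨v, hv, hlt⟩
      rw [← Finset.mul_sum, hsumA, Finset.sum_const, smul_eq_mul, mul_comm,
        ← hacard] at hs
      exact lt_irrefl _ (by rw [mul_comm] at hs; exact hs)
    have hBeq : ∀ v ∈ Aᶜ.toFinset, Nat.card ↥(Aᶜ) * H.degree v = H.edgeCard := by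
      intro v hv
      by_contra hne
      have hlt : Nat.card ↥(Aᶜ) * H.degree v < H.edgeCard := lt_of_le_of_ne (hB v hv) hne
      have hs : ∑ w ∈ Aᶜ.toFinset, (Nat.card ↥(Aᶜ) * H.degree w)
          < ∑ _w ∈ Aᶜ.toFinset, H.edgeCard :=
        Finset.sum_lt_sum (fun w hw => hB w hw) ⟨v, hv, hlt⟩
      rw [← Finset.mul_sum, hsumB, Finset.sum_const, smul_eq_mul, mul_comm,
        ← hbcard] at hs
      exact lt_irrefl _ (by rw [mul_comm] at hs; exact hs)
    have hapos : 0 < Nat.card ↥A := by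
      rw [hacard]
      have := hbip u0 w0 h0
      by_cases hu : u0 ∈ A
      · exact Finset.card_pos.mpr ⟨u0, Set.mem_toFinset.mpr hu⟩
      · exact Finset.card_pos.mpr ⟨w0, Set.mem_toFinset.mpr (by tauto)⟩
    refine ⟨H.edgeCard / Nat.card ↥A, fun v => ?_⟩
    have hkey : Nat.card ↥A * H.degree v = H.edgeCard := by
      by_cases hv : v ∈ A
      · exact hAeq v (Set.mem_toFinset.mpr hv)
      · have := hBeq v (Set.mem_toFinset.mpr hv)
        rw [← hsize] at this
        exact this
    rw [← hkey, Nat.mul_div_cancel_left _ hapos]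
  · refine ⟨0, fun v => ?_⟩
    by_contra hne
    exact hE ⟨v, (H.degree_pos_iff_exists_adj v).mp (Nat.pos_of_ne_zero hne)⟩
end
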